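/- Define g : [1,∞) → ℝ by g(t) := log₂(⌊t⌋) + (t − ⌊t⌋)·(log₂(⌊t⌋ + 1) − log₂(⌊t⌋)), and set c := 2 − log₂ 3. Then the function h(t) := c·g(max(2, t)) + (1−c)·g(t) is concave on [1,∞); moreover, h is affine on the interval [1,3] and h(t) = g(t) for all t ≥ 2. -/

import Mathlib

open Real Set

noncomputable def LL (p t : ℝ) : ℝ :=
  Real.logb 2 p + (t - p) * (Real.logb 2 (p + 1) - Real.logb 2 p)

lemma concave_logb2 : ConcaveOn ℝ (Set.Ioi (0:ℝ)) (Real.logb 2) := by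
  have h : Real.logb 2 = fun x => (Real.log 2)⁻¹ • Real.log x := by
    funext x; simp [Real.logb, div_eq_inv_mul]
  rw [h]
  exact strictConcaveOn_log_Ioi.concaveOn.smul
    (by positivity)

lemma chord_ge {m n : ℕ} (hm : 1 ≤ m) (hn : 1 ≤ n) :
    Real.logb 2 (m:ℝ) ≤ LL (n:ℝ) (m:ℝ) := by
  have hM : (0:ℝ) < m := by exact_mod_cast hm
  have hN : (0:ℝ) < n := by exact_mod_cast hn
  rcases le_or_gt m n with hmn | hnm
  · have hMN : (m:ℝ) ≤ n := by exact_mod_cast hmn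
    have hd : (0:ℝ) < (n:ℝ) + 1 - m := by linarith
    have key := concave_logb2.2 (Set.mem_Ioi.2 hM)
      (Set.mem_Ioi.2 (by linarith : (0:ℝ) < (n:ℝ) + 1))
      (show (0:ℝ) ≤ 1/((n:ℝ)+1-(m:ℝ)) by positivity)
      (show (0:ℝ) ≤ ((n:ℝ)-(m:ℝ))/((n:ℝ)+1-(m:ℝ)) from div_nonneg (by linarith) hd.le)
      (show 1/((n:ℝ)+1-(m:ℝ)) + ((n:ℝ)-(m:ℝ))/((n:ℝ)+1-(m:ℝ)) = 1 by field_simp; ring)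
    simp only [smul_eq_mul] at key
    have hpt : 1/((n:ℝ)+1-m) * m + ((n:ℝ)-m)/((n:ℝ)+1-m) * ((n:ℝ)+1) = n := by
      field_simp; ring
    rw [hpt] at key
    have key2 : (Real.logb 2 m + ((n:ℝ)-m) * Real.logb 2 ((n:ℝ)+1)) / ((n:ℝ)+1-m)
        ≤ Real.logb 2 n := by
      calc (Real.logb 2 m + ((n:ℝ)-m) * Real.logb 2 ((n:ℝ)+1)) / ((n:ℝ)+1-m)
          = 1/((n:ℝ)+1-m) * Real.logb 2 m
            + ((n:ℝ)-m)/((n:ℝ)+1-m) * Real.logb 2 ((n:ℝ)+1) := by ring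
        _ ≤ Real.logb 2 n := key
    rw [div_le_iff₀ hd] at key2
    simp only [LL]
    nlinarith [key2]
  · have hMN : (n:ℝ) + 1 ≤ m := by exact_mod_cast hnm
    have hd : (0:ℝ) < (m:ℝ) - n := by linarith
    have key := concave_logb2.2 (Set.mem_Ioi.2 hN) (Set.mem_Ioi.2 hM)
      (show (0:ℝ) ≤ ((m:ℝ)-(n:ℝ)-1)/((m:ℝ)-(n:ℝ)) from div_nonneg (by linarith) hd.le)
      (show (0:ℝ) ≤ 1/((m:ℝ)-(n:ℝ)) by positivity)
      (show ((m:ℝ)-(n:ℝ)-1)/((m:ℝ)-(n:ℝ)) + 1/((m:ℝ)-(n:ℝ)) = 1 by field_simp; ring)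
    simp only [smul_eq_mul] at key
    have hpt : ((m:ℝ)-n-1)/((m:ℝ)-n) * n + 1/((m:ℝ)-n) * m = (n:ℝ) + 1 := by
      field_simp; ring
    rw [hpt] at key
    have key2 : (((m:ℝ)-n-1) * Real.logb 2 n + Real.logb 2 m) / ((m:ℝ)-n)
        ≤ Real.logb 2 ((n:ℝ)+1) := by
      calc (((m:ℝ)-n-1) * Real.logb 2 n + Real.logb 2 m) / ((m:ℝ)-n)
          = ((m:ℝ)-n-1)/((m:ℝ)-n) * Real.logb 2 n
            + 1/((m:ℝ)-n) * Real.logb 2 m := by ring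
        _ ≤ Real.logb 2 ((n:ℝ)+1) := key
    rw [div_le_iff₀ hd] at key2
    simp only [LL]
    nlinarith [key2]

lemma slope_anti {m n : ℕ} (hm : 1 ≤ m) (hmn : m ≤ n) :
    Real.logb 2 ((n:ℝ)+1) - Real.logb 2 n ≤ Real.logb 2 ((m:ℝ)+1) - Real.logb 2 m := by
  have hM : (0:ℝ) < m := by exact_mod_cast hm
  have hMN : (m:ℝ) ≤ n := by exact_mod_cast hmn
  have hN : (0:ℝ) < n := lt_of_lt_of_le hM hMN
  rw [← Real.logb_div (by linarith) hN.ne', ← Real.logb_div (by linarith) hM.ne']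
  apply (Real.logb_le_logb one_lt_two (by positivity) (by positivity)).2
  rw [div_le_div_iff₀ hN hM]
  nlinarith

noncomputable def Kt (t : ℝ) : ℕ := max 2 ⌊t⌋.toNat

lemma Kt_cast {t : ℝ} (ht : 1 ≤ t) : ((⌊t⌋.toNat : ℕ) : ℝ) = (⌊t⌋ : ℝ) := by
  have h1 : 1 ≤ ⌊t⌋ := Int.le_floor.2 (by exact_mod_cast ht)
  have h2 : (⌊t⌋.toNat : ℤ) = ⌊t⌋ := Int.toNat_of_nonneg (by linarith)
  exact_mod_cast congrArg (fun z : ℤ => (z : ℝ)) h2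

lemma dom {t : ℝ} (ht : 1 ≤ t) {n : ℕ} (hn : 2 ≤ n) :
    LL (Kt t) t ≤ LL n t := by
  have hfl1 : 1 ≤ ⌊t⌋ := Int.le_floor.2 (by exact_mod_cast ht)
  have hcast := Kt_cast ht
  have hK2 : 2 ≤ Kt t := le_max_left 2 _
  have hKdef : Kt t = max 2 ⌊t⌋.toNat := rfl
  rcases le_or_gt (Kt t) n with hkn | hnk
  · set k := Kt t with hkdef
    have htub : t < (k:ℝ) + 1 := by
      have h1 : t < (⌊t⌋ : ℝ) + 1 := Int.lt_floor_add_one t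
      have h2 : ((⌊t⌋.toNat : ℕ) : ℝ) ≤ (k : ℝ) := by
        exact_mod_cast le_max_right 2 ⌊t⌋.toNat
      rw [← hcast] at h1; linarith
    have hch := chord_ge (m := k + 1) (n := n) (by omega) (by omega)
    have hch' : Real.logb 2 ((k:ℝ)+1) ≤ LL (n:ℝ) ((k:ℝ)+1) := by
      push_cast at hch; exact hch
    have hsl := slope_anti (m := k) (n := n) (by omega) hkn
    have hmul : 0 ≤ ((k:ℝ)+1-t) *
        ((Real.logb 2 ((k:ℝ)+1) - Real.logb 2 k)
          - (Real.logb 2 ((n:ℝ)+1) - Real.logb 2 n)) :=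
      mul_nonneg (by linarith) (by linarith)
    have key : LL n t - LL k t =
        (LL (n:ℝ) ((k:ℝ)+1) - Real.logb 2 ((k:ℝ)+1))
        + ((k:ℝ)+1-t) * ((Real.logb 2 ((k:ℝ)+1) - Real.logb 2 k)
          - (Real.logb 2 ((n:ℝ)+1) - Real.logb 2 n)) := by
      simp only [LL]; ring
    linarith
  · have hk : Kt t = ⌊t⌋.toNat := max_eq_right (by omega)
    have htlb : ((Kt t : ℕ) : ℝ) ≤ t := by rw [hk, hcast]; exact Int.floor_le t
    set k := Kt t with hkdef
    have hch := chord_ge (m := k) (n := n) (by omega) (by omega)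
    have hsl := slope_anti (m := n) (n := k) (by omega) hnk.le
    have hmul : 0 ≤ (t - (k:ℝ)) *
        ((Real.logb 2 ((n:ℝ)+1) - Real.logb 2 n)
          - (Real.logb 2 ((k:ℝ)+1) - Real.logb 2 k)) :=
      mul_nonneg (by linarith) (by linarith)
    have key : LL n t - LL k t =
        (LL (n:ℝ) ((k:ℝ)) - Real.logb 2 (k:ℝ))
        + (t - (k:ℝ)) * ((Real.logb 2 ((n:ℝ)+1) - Real.logb 2 n)
          - (Real.logb 2 ((k:ℝ)+1) - Real.logb 2 k)) := by
      simp only [LL]; ring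
    linarith

lemma h_eq (g : ℝ → ℝ)
    (hg : ∀ t : ℝ, g t = Real.logb 2 ((⌊t⌋ : ℝ)) +
      (t - (⌊t⌋ : ℝ)) * (Real.logb 2 ((⌊t⌋ : ℝ) + 1) - Real.logb 2 ((⌊t⌋ : ℝ))))
    {t : ℝ} (ht : 1 ≤ t) :
    (2 - Real.logb 2 3) * g (max 2 t) + (1 - (2 - Real.logb 2 3)) * g t
      = LL (Kt t) t := by
  have l2 : Real.logb 2 2 = 1 := Real.logb_self_eq_one one_lt_two
  rcases lt_or_ge t 2 with h2 | h2
  · have hfloor : ⌊t⌋ = 1 := by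
      rw [Int.floor_eq_iff]; constructor
      · exact_mod_cast ht
      · push_cast; linarith
    have hmax : max 2 t = 2 := max_eq_left h2.le
    have hf2 : ⌊(2:ℝ)⌋ = 2 := by
      rw [show (2:ℝ) = ((2:ℤ):ℝ) by norm_num]; exact Int.floor_intCast 2
    have hK : Kt t = 2 := by unfold Kt; rw [hfloor]; rfl
    rw [hmax, hg t, hg 2, hfloor, hf2, hK]
    simp only [LL]
    push_cast
    rw [Real.logb_one, l2]
    norm_num
    ring
  · have hmax : max 2 t = t := max_eq_right h2
    have hfl2 : (2:ℤ) ≤ ⌊t⌋ := Int.le_floor.2 (by exact_mod_cast h2)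
    have hK : Kt t = ⌊t⌋.toNat := max_eq_right (by omega)
    have hcast := Kt_cast (by linarith : (1:ℝ) ≤ t)
    rw [hmax, hg t]
    simp only [LL, hK, hcast]
    ring

theorem stmt_17 (g : ℝ → ℝ)
    (hg : ∀ t : ℝ, g t = Real.logb 2 ((⌊t⌋ : ℝ)) +
      (t - (⌊t⌋ : ℝ)) * (Real.logb 2 ((⌊t⌋ : ℝ) + 1) - Real.logb 2 ((⌊t⌋ : ℝ)))) :
    ConcaveOn ℝ (Set.Ici (1:ℝ))
      (fun t : ℝ => (2 - Real.logb 2 3) * g (max 2 t)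
        + (1 - (2 - Real.logb 2 3)) * g t) ∧
    (∃ a b : ℝ, ∀ t ∈ Set.Icc (1:ℝ) 3,
      (2 - Real.logb 2 3) * g (max 2 t) + (1 - (2 - Real.logb 2 3)) * g t = a * t + b) ∧
    (∀ t : ℝ, 2 ≤ t →
      (2 - Real.logb 2 3) * g (max 2 t) + (1 - (2 - Real.logb 2 3)) * g t = g t) := by
  have hEq : ∀ t : ℝ, 1 ≤ t →
      (2 - Real.logb 2 3) * g (max 2 t) + (1 - (2 - Real.logb 2 3)) * g t
        = LL (Kt t) t := fun t ht => h_eq g hg ht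
  refine ⟨⟨convex_Ici 1, ?_⟩, ?_, ?_⟩
  · intro x hx y hy a b ha hb hab
    simp only [smul_eq_mul]
    have hx1 : (1:ℝ) ≤ x := hx
    have hy1 : (1:ℝ) ≤ y := hy
    have hz : (1:ℝ) ≤ a * x + b * y := by nlinarith
    rw [hEq x hx1, hEq y hy1, hEq _ hz]
    have exp : LL (Kt (a*x+b*y)) (a*x+b*y)
        = a * LL (Kt (a*x+b*y)) x + b * LL (Kt (a*x+b*y)) y := by
      simp only [LL]
      linear_combination ((Kt (a*x+b*y) : ℝ) * (Real.logb 2 ((Kt (a*x+b*y) : ℝ) + 1)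
          - Real.logb 2 ((Kt (a*x+b*y) : ℝ))) - Real.logb 2 ((Kt (a*x+b*y) : ℝ))) * hab
    rw [exp]
    have hdx := dom hx1 (n := Kt (a*x+b*y)) (le_max_left 2 _)
    have hdy := dom hy1 (n := Kt (a*x+b*y)) (le_max_left 2 _)
    exact add_le_add (mul_le_mul_of_nonneg_left hdx ha)
      (mul_le_mul_of_nonneg_left hdy hb)
  · refine ⟨Real.logb 2 3 - 1, 3 - 2 * Real.logb 2 3, fun t htm => ?_⟩
    obtain ⟨ht1, ht3⟩ := htm
    have l2 : Real.logb 2 2 = 1 := Real.logb_self_eq_one one_lt_two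
    rcases eq_or_lt_of_le ht3 with h3 | h3
    · subst h3
      have hmax : max (2:ℝ) 3 = 3 := by norm_num
      have hf3 : ⌊(3:ℝ)⌋ = 3 := by
        rw [show (3:ℝ) = ((3:ℤ):ℝ) by norm_num]; exact Int.floor_intCast 3
      rw [hmax, hg 3, hf3]
      push_cast
      ring
    · have hfl : ⌊t⌋ < 3 := Int.floor_lt.2 (by exact_mod_cast h3)
      have hK : Kt t = 2 := max_eq_left (by omega)
      rw [hEq t ht1, hK]
      simp only [LL]
      push_cast
      rw [l2]
      ring
  · intro t ht
    rw [max_eq_right ht]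
    ring
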